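/- arXiv:2211.07140 — 3 statements merged into one kernel-verified Lean document; each statement's English description precedes it below -/
import Mathlib

section
/- Let π : ℤ^d → Γ be a surjective group homomorphism with kernel L, let F ⊆ Γ with 0 ∈ F, let A ⊆ Γ, and let D be a fundamental domain for L. Then π⁻¹(F ⊕ A) = ((π⁻¹(F \ {0}) ∩ D) ⊕ π⁻¹(A)) ⊎ π⁻¹(A), where the union is disjoint, provided F ⊕ A is a direct sum (every element of F + A has a unique representation f + a). -/
open Pointwise

/-- `A ⊕ B` is direct: representations `a + b` with `a ∈ A`, `b ∈ B` are unique. -/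
def UniqRep {G : Type*} [AddCommGroup G] (A B : Set G) : Prop :=
  ∀ a₁ ∈ A, ∀ b₁ ∈ B, ∀ a₂ ∈ A, ∀ b₂ ∈ B, a₁ + b₁ = a₂ + b₂ → a₁ = a₂ ∧ b₁ = b₂

/-- `A ⊕ B = C`: the sumset `A + B` equals `C` and representations are unique. -/
def DSum {G : Type*} [AddCommGroup G] (A B C : Set G) : Prop :=
  UniqRep A B ∧ A + B = C

theorem stmt4 {d : ℕ} {Γ : Type*} [AddCommGroup Γ] (π : (Fin d → ℤ) →+ Γ)
    (hπ : Function.Surjective π) (D : Set (Fin d → ℤ))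
    (hD : DSum D (π.ker : Set (Fin d → ℤ)) Set.univ) (hD0 : (0 : Fin d → ℤ) ∈ D)
    (F A : Set Γ) (hF0 : (0 : Γ) ∈ F) (hFA : UniqRep F A) :
    π ⁻¹' (F + A) = ((π ⁻¹' (F \ {0}) ∩ D) + π ⁻¹' A) ∪ π ⁻¹' A ∧
    Disjoint ((π ⁻¹' (F \ {0}) ∩ D) + π ⁻¹' A) (π ⁻¹' A) ∧
    UniqRep (π ⁻¹' (F \ {0}) ∩ D) (π ⁻¹' A) := by
  obtain ⟨hDu, hDe⟩ := hD
  refine ⟨?_, ?_, ?_⟩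
  · ext x
    simp only [Set.mem_preimage, Set.mem_union, Set.mem_add]
    constructor
    · intro h
      obtain ⟨f, hf, a, ha, hfa⟩ := h
      by_cases hf0 : f = 0
      · right
        rw [← hfa, hf0, zero_add]; exact ha
      · left
        obtain ⟨y, hy⟩ := hπ f
        have hyu : y ∈ D + (π.ker : Set (Fin d → ℤ)) := by rw [hDe]; trivial
        rw [Set.mem_add] at hyu
        obtain ⟨d', hd', l, hl, hdl⟩ := hyu
        have hπd : π d' = f := by
          have h1 : π (d' + l) = f := by rw [hdl]; exact hy
          rwa [map_add, AddMonoidHom.mem_ker.mp hl, add_zero] at h1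
        refine ⟨d', ⟨?_, hd'⟩, x - d', ?_, by abel⟩
        · rw [Set.mem_preimage, hπd]; exact ⟨hf, hf0⟩
        · rw [map_sub, hπd, ← hfa, add_sub_cancel_left]
          exact ha
    · rintro (⟨y, hy1, z, hz, rfl⟩ | h)
      · obtain ⟨hy1, _⟩ := hy1
        rw [Set.mem_preimage, Set.mem_diff] at hy1
        exact ⟨π y, hy1.1, π z, hz, (map_add π y z).symm⟩
      · exact ⟨0, hF0, π x, h, zero_add _⟩
  · rw [Set.disjoint_left]
    rintro x hmem hx
    rw [Set.mem_add] at hmem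
    obtain ⟨y, ⟨hy1, _⟩, z, hz, rfl⟩ := hmem
    rw [Set.mem_preimage, Set.mem_diff, Set.mem_singleton_iff] at hy1
    have hxA : π (y + z) ∈ A := hx
    have := hFA 0 hF0 (π (y + z)) hxA (π y) hy1.1 (π z) hz (by rw [zero_add, map_add])
    exact hy1.2 this.1.symm
  · rintro y₁ ⟨hy₁, hy₁D⟩ z₁ hz₁ y₂ ⟨hy₂, hy₂D⟩ z₂ hz₂ heq
    rw [Set.mem_preimage, Set.mem_diff] at hy₁ hy₂
    have hπeq : π y₁ + π z₁ = π y₂ + π z₂ := by rw [← map_add, ← map_add, heq]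
    have h := hFA (π y₁) hy₁.1 (π z₁) hz₁ (π y₂) hy₂.1 (π z₂) hz₂ hπeq
    have hker : y₁ - y₂ ∈ π.ker := by
      rw [AddMonoidHom.mem_ker, map_sub, h.1, sub_self]
    have hy : y₁ = y₂ := by
      have := hDu y₂ hy₂D (y₁ - y₂) hker y₁ hy₁D 0 (AddSubgroup.zero_mem _)
        (by abel)
      exact this.1.symm
    exact ⟨hy, by rw [hy] at heq; exact add_left_cancel heq⟩
end

section
/- Let G be an abelian group, let T, T' ⊆ G be finite sets, let H ≤ G be a subgroup with T ⊕ H = T' ⊕ H (as direct sums giving the same set), and let C ⊆ G be H-periodic. Then T ⊕ C = T' ⊕ C whenever either side is a direct sum; in particular, if C ∈ Tile(T; E) and C is H-periodic, then C ∈ Tile(T'; E). -/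
open Pointwise

theorem stmt7 {G : Type*} [AddCommGroup G] (T T' : Set G) (hT : T.Finite) (hT' : T'.Finite)
    (H : AddSubgroup G)
    (hTH : UniqRep T (H : Set G)) (hT'H : UniqRep T' (H : Set G))
    (hEq : T + (H : Set G) = T' + (H : Set G))
    (C : Set G) (hC : ∀ h ∈ H, ∀ x : G, x + h ∈ C ↔ x ∈ C) :
    T + C = T' + C ∧ (UniqRep T C ↔ UniqRep T' C) ∧
      ∀ E : Set G, DSum T C E → DSum T' C E := by
  have decomp : ∀ (A B : Set G), A + (H : Set G) = B + (H : Set G) →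
      ∀ t ∈ A, ∃ t' ∈ B, ∃ h ∈ H, t = t' + h := by
    intro A B hAB t ht
    have : t ∈ B + (H : Set G) := by
      rw [← hAB]; exact ⟨t, ht, 0, H.zero_mem, add_zero t⟩
    obtain ⟨t', ht', h, hh, he⟩ := this
    exact ⟨t', ht', h, hh, he.symm⟩
  have keyT := decomp T T' hEq
  have keyT' := decomp T' T hEq.symm
  have hsub : ∀ (A B : Set G), (∀ t ∈ A, ∃ t' ∈ B, ∃ h ∈ H, t = t' + h) →
      A + C ⊆ B + C := by
    intro A B hAB x hx
    obtain ⟨a, ha, c, hc, rfl⟩ := hx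
    obtain ⟨b, hb, h, hh, rfl⟩ := hAB a ha
    exact ⟨b, hb, c + h, (hC h hh c).mpr hc, by abel⟩
  have hAdd : T + C = T' + C :=
    Set.Subset.antisymm (hsub T T' keyT) (hsub T' T keyT')
  have uniq : ∀ (A B : Set G), UniqRep B (H : Set G) →
      (∀ t ∈ B, ∃ t' ∈ A, ∃ h ∈ H, t = t' + h) → UniqRep A C → UniqRep B C := by
    intro A B hBH hBA hAC b₁ hb₁ c₁ hc₁ b₂ hb₂ c₂ hc₂ heq
    obtain ⟨a₁, ha₁, h₁, hh₁, rfl⟩ := hBA b₁ hb₁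
    obtain ⟨a₂, ha₂, h₂, hh₂, rfl⟩ := hBA b₂ hb₂
    have h₁C : c₁ + h₁ ∈ C := (hC h₁ hh₁ c₁).mpr hc₁
    have h₂C : c₂ + h₂ ∈ C := (hC h₂ hh₂ c₂).mpr hc₂
    have heq' : a₁ + (c₁ + h₁) = a₂ + (c₂ + h₂) := by
      have := heq; abel_nf at this ⊢; linear_combination (norm := abel_nf) this
    obtain ⟨hae, hce⟩ := hAC a₁ ha₁ (c₁ + h₁) h₁C a₂ ha₂ (c₂ + h₂) h₂C heq'
    have hBeq : (a₁ + h₁) + h₂ = (a₂ + h₂) + h₁ := by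
      have : c₁ + h₁ = c₂ + h₂ := hce
      linear_combination (norm := abel_nf) hae
    obtain ⟨hb, hh⟩ := hBH (a₁ + h₁) hb₁ h₂ hh₂ (a₂ + h₂) hb₂ h₁ hh₁ hBeq
    refine ⟨hb, ?_⟩
    have := heq
    rw [hb] at this
    exact add_left_cancel this
  have hUiff : UniqRep T C ↔ UniqRep T' C :=
    ⟨fun h => uniq T T' hT'H keyT' h, fun h => uniq T' T hTH keyT h⟩
  refine ⟨hAdd, hUiff, fun E ⟨h1, h2⟩ => ⟨hUiff.mp h1, by rw [← hAdd]; exact h2⟩⟩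
end

section
/- Suppose D ⊆ ℤ^d is a fundamental domain for L = ker(π) with 0 ∈ D, and suppose sets A₁,…,A_k ⊆ Γ satisfy that the sets (π⁻¹(F_j) ∩ D) ⊕ π⁻¹(A_j) (direct sums) are pairwise disjoint with union ℤ^d, where each π⁻¹(A_j) is L-periodic. Then the sets F_j ⊕ A_j are direct sums, pairwise disjoint, with union Γ, i.e., (A₁,…,A_k) ∈ Tile(F₁,…,F_k; Γ). -/
open Pointwise

theorem stmt19 {d k : ℕ} {Γ : Type*} [AddCommGroup Γ] (π : (Fin d → ℤ) →+ Γ)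
    (hπ : Function.Surjective π) (D : Set (Fin d → ℤ))
    (hD : DSum D (π.ker : Set (Fin d → ℤ)) Set.univ) (hD0 : (0 : Fin d → ℤ) ∈ D)
    (F : Fin k → Set Γ) (hF : ∀ j, (F j).Finite) (A : Fin k → Set Γ)
    (hper : ∀ j, ∀ l ∈ π.ker, ∀ x : Fin d → ℤ,
      x + l ∈ π ⁻¹' (A j) ↔ x ∈ π ⁻¹' (A j))
    (hU : ∀ j, UniqRep (π ⁻¹' (F j) ∩ D) (π ⁻¹' (A j)))
    (hdisj : Pairwise (Function.onFun Disjoint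
      (fun j => (π ⁻¹' (F j) ∩ D) + π ⁻¹' (A j))))
    (hcover : (⋃ j, (π ⁻¹' (F j) ∩ D) + π ⁻¹' (A j)) = Set.univ) :
    (∀ j, UniqRep (F j) (A j)) ∧
    Pairwise (Function.onFun Disjoint (fun j => F j + A j)) ∧
    (⋃ j, F j + A j) = Set.univ := by
  -- every element of Γ has a lift in D
  have hlift : ∀ g : Γ, ∃ x ∈ D, π x = g := by
    intro g
    obtain ⟨y, hy⟩ := hπ g
    have : y ∈ D + (π.ker : Set (Fin d → ℤ)) := by rw [hD.2]; trivial
    obtain ⟨u, hu, l, hl, huv⟩ := this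
    refine ⟨u, hu, ?_⟩
    have : π y = π u + π l := by rw [← huv]; simp
    rw [hy] at this
    have hl0 : π l = 0 := hl
    rw [hl0, add_zero] at this
    exact this.symm
  refine ⟨?_, ?_, ?_⟩
  · -- UniqRep
    intro j f₁ hf₁ a₁ ha₁ f₂ hf₂ a₂ ha₂ heq
    obtain ⟨x₁, hx₁D, hx₁⟩ := hlift f₁
    obtain ⟨x₂, hx₂D, hx₂⟩ := hlift f₂
    obtain ⟨y₁, hy₁⟩ := hπ a₁
    obtain ⟨y₂, hy₂⟩ := hπ a₂
    have hker : (x₁ + y₁) - (x₂ + y₂) ∈ π.ker := by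
      rw [AddMonoidHom.mem_ker]; simp [hx₁, hx₂, hy₁, hy₂, heq]
    have hy₂' : y₂ + ((x₁ + y₁) - (x₂ + y₂)) ∈ π ⁻¹' (A j) := by
      rw [hper j _ hker]
      simp [Set.mem_preimage, hy₂, ha₂]
    have hsum : x₁ + y₁ = x₂ + (y₂ + ((x₁ + y₁) - (x₂ + y₂))) := by abel
    have := hU j x₁ ⟨by simp [Set.mem_preimage, hx₁, hf₁], hx₁D⟩ y₁
      (by simp [Set.mem_preimage, hy₁, ha₁]) x₂
      ⟨by simp [Set.mem_preimage, hx₂, hf₂], hx₂D⟩ _ hy₂' hsum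
    obtain ⟨h1, h2⟩ := this
    constructor
    · rw [← hx₁, ← hx₂, h1]
    · rw [← hy₁, h2]
      have : π (y₂ + ((x₁ + y₁) - (x₂ + y₂))) = π y₂ := by
        simp [map_add, AddMonoidHom.mem_ker.mp hker]
      rw [this, hy₂]
  · -- pairwise disjoint
    intro i j hij
    simp only [Function.onFun, Set.disjoint_left]
    intro g hgi hgj
    obtain ⟨fi, hfi, ai, hai, hgi'⟩ := hgi
    obtain ⟨fj, hfj, aj, haj, hgj'⟩ := hgj
    obtain ⟨xi, hxiD, hxi⟩ := hlift fi
    obtain ⟨xj, hxjD, hxj⟩ := hlift fj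
    obtain ⟨yi, hyi⟩ := hπ ai
    obtain ⟨yj, hyj⟩ := hπ aj
    have hker : (xi + yi) - (xj + yj) ∈ π.ker := by
      rw [AddMonoidHom.mem_ker]; simp [hxi, hxj, hyi, hyj, hgi', hgj']
    have hyj' : yj + ((xi + yi) - (xj + yj)) ∈ π ⁻¹' (A j) := by
      rw [hper j _ hker]
      simp [Set.mem_preimage, hyj, haj]
    have hmemi : xi + yi ∈ (π ⁻¹' (F i) ∩ D) + π ⁻¹' (A i) :=
      ⟨xi, ⟨by simp [Set.mem_preimage, hxi, hfi], hxiD⟩, yi,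
        by simp [Set.mem_preimage, hyi, hai], rfl⟩
    have hmemj : xi + yi ∈ (π ⁻¹' (F j) ∩ D) + π ⁻¹' (A j) :=
      ⟨xj, ⟨by simp [Set.mem_preimage, hxj, hfj], hxjD⟩, _, hyj', by abel⟩
    exact Set.disjoint_left.mp (hdisj hij) hmemi hmemj
  · -- cover
    apply Set.eq_univ_of_forall
    intro g
    obtain ⟨x, hx⟩ := hπ g
    have : x ∈ ⋃ j, (π ⁻¹' (F j) ∩ D) + π ⁻¹' (A j) := by rw [hcover]; trivial
    obtain ⟨_, ⟨j, rfl⟩, u, ⟨hu1, _⟩, v, hv, huv⟩ := this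
    exact Set.mem_iUnion.2 ⟨j, π u, hu1, π v, hv, by show π u + π v = g; rw [← map_add, show u + v = x from huv, hx]⟩
end
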